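/- Let d ≥ 2 and n ≥ 1 be integers and set δ := 1/(n+2). If x ∈ S^{n+δ} satisfies 0 ≤ x_d ≤ δ, then there exists a pair (v,π), with v ∈ ℤ^d admissible for n+1 and v_d = 0, such that x belongs to the Kuhn simplex k((1−δ)v, π). -/

import Mathlib

/-- The right `d`-simplex `S^α = {x ∈ ℝ^d : α ≥ x_1 ≥ x_2 ≥ … ≥ x_d ≥ 0}`
(coordinates indexed by `Fin d`, in order). -/
def Sset (d : ℕ) (α : ℝ) : Set (Fin d → ℝ) :=
  {x | (∀ i : Fin d, 0 ≤ x i ∧ x i ≤ α) ∧ ∀ i j : Fin d, i ≤ j → x j ≤ x i}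

/-- The Kuhn simplex `k(v,π) = {x : 1 ≥ (x−v)_{π(1)} ≥ … ≥ (x−v)_{π(d)} ≥ 0}`. -/
def kuhn (d : ℕ) (v : Fin d → ℝ) (π : Equiv.Perm (Fin d)) : Set (Fin d → ℝ) :=
  {x | (∀ i : Fin d, 0 ≤ x (π i) - v (π i) ∧ x (π i) - v (π i) ≤ 1) ∧
       ∀ i j : Fin d, i ≤ j → x (π j) - v (π j) ≤ x (π i) - v (π i)}

/-- `(v,π)` with `v ∈ ℤ^d` is admissible for `m` if `v ∈ S^{m-1}` and whenever
`v_j = v_{j+1}`, `j` precedes `j+1` in `π`, i.e. `π⁻¹(j) < π⁻¹(j+1)`. -/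
def admissible (d m : ℕ) (v : Fin d → ℤ) (π : Equiv.Perm (Fin d)) : Prop :=
  ((fun i => (v i : ℝ)) ∈ Sset d ((m : ℝ) - 1)) ∧
  ∀ (j : Fin d) (h : (j : ℕ) + 1 < d),
    v j = v ⟨(j : ℕ) + 1, h⟩ → π.symm j < π.symm ⟨(j : ℕ) + 1, h⟩

/-- if `x ∈ S^{n+δ}` with `0 ≤ x_d ≤ δ`, then there is a pair `(v,π)`
admissible for `n+1` with `v_d = 0` and `x ∈ k((1-δ)v, π)`. -/
theorem bottom_sliver_cover (d n : ℕ) (hd : 2 ≤ d) (hn : 1 ≤ n)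
    (δ : ℝ) (hδ : δ = ((n : ℝ) + 2)⁻¹)
    (x : Fin d → ℝ) (hx : x ∈ Sset d ((n : ℝ) + δ))
    (hxd0 : 0 ≤ x ⟨d - 1, by omega⟩) (hxd : x ⟨d - 1, by omega⟩ ≤ δ) :
    ∃ (v : Fin d → ℤ) (π : Equiv.Perm (Fin d)),
      admissible d (n + 1) v π ∧ v ⟨d - 1, by omega⟩ = 0 ∧
      x ∈ kuhn d (fun i => (1 - δ) * (v i : ℝ)) π := by
  obtain ⟨hx1, hx2⟩ := hx
  have hn2 : (0:ℝ) < (n:ℝ) + 2 := by positivity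
  have hδpos : 0 < δ := by rw [hδ]; positivity
  have hn1 : (1:ℝ) ≤ (n:ℝ) := by exact_mod_cast hn
  have hδle : δ ≤ 1/3 := by
    rw [hδ]
    rw [show (1:ℝ)/3 = (3:ℝ)⁻¹ by norm_num]
    exact inv_anti₀ (by norm_num) (by linarith)
  have hc0 : (0:ℝ) < 1 - δ := by linarith
  set c : ℝ := 1 - δ with hc
  -- key identity
  have hkey : c * ((n:ℝ) + 1) = (n:ℝ) + δ := by
    rw [hc, hδ]; field_simp; ring
  set v : Fin d → ℤ := fun i => min ⌊x i / c⌋ (n:ℤ) with hvdef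
  set y : Fin d → ℝ := fun i => x i - c * (v i : ℝ) with hydef
  have hv0 : ∀ i, 0 ≤ v i := by
    intro i
    exact le_min (Int.floor_nonneg.mpr (div_nonneg (hx1 i).1 hc0.le)) (by positivity)
  have hvn : ∀ i, v i ≤ (n:ℤ) := fun i => min_le_right _ _
  have hy0 : ∀ i, 0 ≤ y i := by
    intro i
    have h1 : (v i : ℝ) ≤ x i / c := by
      calc (v i : ℝ) ≤ (⌊x i / c⌋ : ℝ) := by exact_mod_cast min_le_left _ _
        _ ≤ x i / c := Int.floor_le _
    have := (le_div_iff₀ hc0).mp h1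
    simp only [hydef]; nlinarith
  have hyc : ∀ i, y i ≤ c := by
    intro i
    by_cases hfl : ⌊x i / c⌋ ≤ (n:ℤ)
    · have hve : v i = ⌊x i / c⌋ := min_eq_left hfl
      have h2 : x i / c < (⌊x i / c⌋ : ℝ) + 1 := Int.lt_floor_add_one _
      have h3 : x i < ((⌊x i / c⌋ : ℝ) + 1) * c := (div_lt_iff₀ hc0).mp h2
      simp only [hydef, hve]; nlinarith
    · have hve : v i = (n:ℤ) := min_eq_right (le_of_lt (lt_of_not_ge hfl))
      have h2 : x i ≤ (n:ℝ) + δ := (hx1 i).2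
      simp only [hydef, hve]
      push_cast
      nlinarith
  have hy1 : ∀ i, y i ≤ 1 := fun i => le_trans (hyc i) (by linarith)
  -- v monotone decreasing
  have hvmono : ∀ i j : Fin d, i ≤ j → v j ≤ v i := by
    intro i j hij
    exact min_le_min (Int.floor_le_floor (by
      exact div_le_div_of_nonneg_right (hx2 i j hij) hc0.le)) le_rfl
  -- sorting key
  set key : Fin d → Lex (ℝ × Fin d) := fun i => toLex (-(y i), i) with hkeydef
  have hkeyinj : Function.Injective key := by
    intro a b hab
    have := congrArg (fun p => (ofLex p).2) hab
    simpa [hkeydef] using this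
  set σ : Equiv.Perm (Fin d) := Tuple.sort key with hσdef
  have hmono : Monotone (key ∘ σ) := Tuple.monotone_sort key
  have hstrict : StrictMono (key ∘ σ) :=
    hmono.strictMono_of_injective (hkeyinj.comp σ.injective)
  -- antitone of y along σ
  have hyanti : ∀ i j : Fin d, i ≤ j → y (σ j) ≤ y (σ i) := by
    intro i j hij
    have h := hmono hij
    have h2 := Prod.Lex.monotone_fst _ _ h
    simp only [hkeydef, Function.comp_apply, ofLex_toLex] at h2
    linarith
  have hSset : (fun i => (v i : ℝ)) ∈ Sset d (((n + 1 : ℕ) : ℝ) - 1) := by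
    constructor
    · intro i
      show (0:ℝ) ≤ (v i : ℝ) ∧ (v i : ℝ) ≤ _
      refine ⟨by exact_mod_cast hv0 i, ?_⟩
      have h1 : (v i : ℝ) ≤ (n:ℝ) := by exact_mod_cast hvn i
      push_cast
      linarith
    · intro i j hij
      show (v j : ℝ) ≤ (v i : ℝ)
      exact_mod_cast hvmono i j hij
  refine ⟨v, σ, ⟨hSset, ?_⟩, ?_, ⟨fun i => ?_, fun i j hij => ?_⟩⟩
  · -- stability
    intro j h hveq
    set j' : Fin d := ⟨(j:ℕ)+1, h⟩ with hj'
    have hjlt : j < j' := by simp [hj', Fin.lt_def]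
    have hyj : y j' ≤ y j := by
      have hxle : x j' ≤ x j := hx2 j j' hjlt.le
      simp only [hydef, hveq]
      linarith
    have hklt : key j < key j' := by
      rw [hkeydef]
      rw [Prod.Lex.lt_iff]
      rcases lt_or_eq_of_le (neg_le_neg hyj) with h1 | h1
      · exact Or.inl h1
      · exact Or.inr ⟨h1, hjlt⟩
    have := hstrict.lt_iff_lt (a := σ.symm j) (b := σ.symm j')
    simp only [Function.comp_apply, Equiv.apply_symm_apply] at this
    exact this.mp hklt
  · -- v at last coordinate is 0
    have hfl0 : ⌊x ⟨d-1, by omega⟩ / c⌋ = 0 := by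
      rw [Int.floor_eq_zero_iff]
      constructor
      · exact div_nonneg hxd0 hc0.le
      · rw [div_lt_one hc0]; linarith
    simp only [hvdef, hfl0]
    exact min_eq_left (by positivity)
  · constructor
    · exact hy0 (σ i)
    · exact hy1 (σ i)
  · exact hyanti i j hij
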